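/- (Courant–Fischer analogue, max-min form.) Let A be an admissible pseudo-Hermitian n×n matrix with eigenvalues λ_p ≥ … ≥ λ_1 > μ_1 ≥ … ≥ μ_q, and let 1 ≤ k ≤ p. Then: (i) for every choice of vectors u_1, …, u_{k−1} ∈ ℂⁿ there exists x ∈ ℂⁿ₊ with ⟨x, u_i⟩ = 0 for all i and R_A(x) ≤ λ_k; and (ii) there exist vectors u_1, …, u_{k−1} ∈ ℂⁿ such that every x ∈ ℂⁿ₊ with ⟨x, u_i⟩ = 0 for all i satisfies R_A(x) ≥ λ_k, and such that λ_k is attained by some such x. Consequently λ_k = max over (k−1)-tuples (u_1,…,u_{k−1}) of the infimum of R_A(x) over x ∈ ℂⁿ₊ orthogonal to u_1,…,u_{k−1}. -/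
import Mathlib


open Matrix

/-- The signature matrix `J = diag(1,…,1,−1,…,−1)` with `p` ones and `q` minus-ones. -/
noncomputable def Jmat (p q : ℕ) : Matrix (Fin (p + q)) (Fin (p + q)) ℂ :=
  Matrix.diagonal (fun i => if (i : ℕ) < p then 1 else -1)

/-- The indefinite pairing `⟨z,w⟩ = Σ_{i<p} z_i conj(w_i) − Σ_{i≥p} z_i conj(w_i)`;
equivalently `w† · z` where `x† = (J conj(x))ᵀ`. -/
noncomputable def pairing (p q : ℕ) (z w : Fin (p + q) → ℂ) : ℂ :=
  ∑ i : Fin (p + q),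
    (if (i : ℕ) < p then z i * (starRingEnd ℂ) (w i) else -(z i * (starRingEnd ℂ) (w i)))

/-- The diagonal entries of `Λ = diag(λ_p, …, λ_1, μ_1, …, μ_q)`, where `lam` and `mu`
are 0-indexed: `lam i = λ_{i+1}` and `mu j = μ_{j+1}`. -/
noncomputable def diagEntries (p q : ℕ) (lam : Fin p → ℝ) (mu : Fin q → ℝ) :
    Fin (p + q) → ℂ :=
  fun i =>
    if h : (i : ℕ) < p then ((lam ⟨p - 1 - (i : ℕ), by omega⟩ : ℝ) : ℂ)
    else ((mu ⟨(i : ℕ) - p, by have := i.isLt; omega⟩ : ℝ) : ℂ)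

/-- `A` is an admissible pseudo-Hermitian matrix with (real) eigenvalues
`λ_p ≥ … ≥ λ_1 > μ_1 ≥ … ≥ μ_q`, recorded 0-indexed as `lam i = λ_{i+1}` (so `lam` is
monotone) and `mu j = μ_{j+1}` (so `mu` is antitone), with `λ_1 > μ_1`, and
`A = U Λ U⁻¹` for some invertible `U` with `U J Uᴴ = J`. -/
def IsAdmissible (p q : ℕ) (hp : 0 < p) (hq : 0 < q)
    (A : Matrix (Fin (p + q)) (Fin (p + q)) ℂ)
    (lam : Fin p → ℝ) (mu : Fin q → ℝ) : Prop :=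
  A * Jmat p q = Jmat p q * A.conjTranspose ∧
  Monotone lam ∧ Antitone mu ∧ mu ⟨0, hq⟩ < lam ⟨0, hp⟩ ∧
  ∃ U : Matrix (Fin (p + q)) (Fin (p + q)) ℂ,
    IsUnit U ∧ U * Jmat p q * U.conjTranspose = Jmat p q ∧
    A = U * Matrix.diagonal (diagEntries p q lam mu) * U⁻¹

/-- The Rayleigh ratio `R_A(x) = (x† A x)/(x† x)`, as a real number (for admissible
pseudo-Hermitian `A` both `x† A x` and `x† x` are real). -/
noncomputable def rayleigh (p q : ℕ) (A : Matrix (Fin (p + q)) (Fin (p + q)) ℂ)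
    (x : Fin (p + q) → ℂ) : ℝ :=
  (pairing p q (A.mulVec x) x).re / (pairing p q x x).re

section CFhelpers

lemma pairing_eq_dot (p q : ℕ) (z w : Fin (p+q) → ℂ) :
    pairing p q z w = star w ⬝ᵥ (Jmat p q).mulVec z := by
  unfold pairing Jmat dotProduct
  apply Finset.sum_congr rfl
  intro i _
  simp only [mulVec_diagonal, Pi.star_apply, RCLike.star_def]
  split_ifs <;> ring

lemma Jmat_sq (p q : ℕ) : Jmat p q * Jmat p q = 1 := by
  unfold Jmat
  rw [diagonal_mul_diagonal]
  have h : (fun i : Fin (p+q) => (if (i:ℕ)<p then (1:ℂ) else -1) * (if (i:ℕ)<p then 1 else -1)) = fun _ => 1 := by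
    funext i; split_ifs <;> ring
  rw [h, diagonal_one]

lemma UJU (p q : ℕ) (U : Matrix (Fin (p+q)) (Fin (p+q)) ℂ) (hUnit : IsUnit U)
    (hU : U * Jmat p q * U.conjTranspose = Jmat p q) :
    U.conjTranspose * Jmat p q * U = Jmat p q := by
  have hdet : IsUnit U.det := (isUnit_iff_isUnit_det U).mp hUnit
  have h1 : Jmat p q * U.conjTranspose = U⁻¹ * Jmat p q := by
    have := congrArg (fun M => U⁻¹ * M) hU
    simpa [← mul_assoc, nonsing_inv_mul U hdet] using this
  have h2 : U.conjTranspose = Jmat p q * (U⁻¹ * Jmat p q) := by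
    have := congrArg (fun M => Jmat p q * M) h1
    simpa [← mul_assoc, Jmat_sq p q] using this
  rw [h2]
  calc Jmat p q * (U⁻¹ * Jmat p q) * Jmat p q * U
      = Jmat p q * U⁻¹ * (Jmat p q * Jmat p q) * U := by noncomm_ring
    _ = Jmat p q * (U⁻¹ * U) := by rw [Jmat_sq]; noncomm_ring
    _ = Jmat p q := by rw [nonsing_inv_mul U hdet, mul_one]

lemma pairing_mulVec (p q : ℕ) (U : Matrix (Fin (p+q)) (Fin (p+q)) ℂ)
    (hU' : U.conjTranspose * Jmat p q * U = Jmat p q) (y w : Fin (p+q) → ℂ) :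
    pairing p q (U.mulVec y) (U.mulVec w) = pairing p q y w := by
  rw [pairing_eq_dot, pairing_eq_dot, star_mulVec, mulVec_mulVec, dotProduct_mulVec,
    vecMul_vecMul, ← mul_assoc, hU', ← dotProduct_mulVec]

lemma pairing_add_left (p q : ℕ) (z z' w : Fin (p+q) → ℂ) :
    pairing p q (z + z') w = pairing p q z w + pairing p q z' w := by
  simp [pairing_eq_dot, mulVec_add, dotProduct_add]

lemma pairing_smul_left (p q : ℕ) (a : ℂ) (z w : Fin (p+q) → ℂ) :
    pairing p q (a • z) w = a * pairing p q z w := by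
  simp [pairing_eq_dot, mulVec_smul, dotProduct_smul, smul_eq_mul]

lemma pairing_self_re (p q : ℕ) (y : Fin (p+q) → ℂ) :
    (pairing p q y y).re
      = ∑ i : Fin (p+q), (if (i:ℕ) < p then (1:ℝ) else -1) * Complex.normSq (y i) := by
  unfold pairing
  rw [Complex.re_sum]
  apply Finset.sum_congr rfl
  intro i _
  split_ifs <;> simp [Complex.mul_conj]

lemma pairing_diag_re (p q : ℕ) (d : Fin (p+q) → ℝ) (y : Fin (p+q) → ℂ) :
    (pairing p q ((Matrix.diagonal (fun i => (d i : ℂ))).mulVec y) y).re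
      = ∑ i : Fin (p+q), ((if (i:ℕ) < p then (1:ℝ) else -1) * d i) * Complex.normSq (y i) := by
  unfold pairing
  rw [Complex.re_sum]
  apply Finset.sum_congr rfl
  intro i _
  rw [mulVec_diagonal]
  split_ifs <;>
    simp [mul_assoc, Complex.mul_conj, ← Complex.ofReal_mul]

lemma pairing_dual (p q : ℕ) (v x : Fin (p+q) → ℂ) :
    pairing p q x (fun m => (if (m:ℕ) < p then 1 else -1) * (starRingEnd ℂ) (v m))
      = v ⬝ᵥ x := by
  unfold pairing dotProduct
  apply Finset.sum_congr rfl
  intro i _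
  by_cases h : (i:ℕ) < p <;> simp [h, _root_.map_mul, Complex.conj_conj] <;> ring

lemma exists_ker (a b : ℕ) (f : (Fin a → ℂ) →ₗ[ℂ] (Fin b → ℂ)) (h : b < a) :
    ∃ c : Fin a → ℂ, c ≠ 0 ∧ f c = 0 := by
  have h1 : Module.finrank ℂ (Fin b → ℂ) < Module.finrank ℂ (Fin a → ℂ) := by
    simpa using h
  have := LinearMap.ker_ne_bot_of_finrank_lt (f := f) h1
  rcases Submodule.ne_bot_iff _ |>.mp this with ⟨c, hc, hc0⟩
  exact ⟨c, hc0, hc⟩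

/-- `dr i` : the real diagonal entries. -/
noncomputable def drFun (p q : ℕ) (lam : Fin p → ℝ) (mu : Fin q → ℝ) : Fin (p+q) → ℝ :=
  fun i => if h : (i:ℕ) < p then lam ⟨p - 1 - (i:ℕ), by omega⟩
           else mu ⟨(i:ℕ) - p, by have := i.isLt; omega⟩

lemma diagEntries_eq (p q : ℕ) (lam : Fin p → ℝ) (mu : Fin q → ℝ) :
    diagEntries p q lam mu = fun i => ((drFun p q lam mu i : ℝ) : ℂ) := by
  funext i
  by_cases h : (i:ℕ) < p <;> simp [diagEntries, drFun, h]

/-- embedding of `Fin k → ℂ` as vectors supported on coordinates `p-k, …, p-1`. -/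
noncomputable def embF (p q k : ℕ) (c : Fin k → ℂ) : Fin (p+q) → ℂ :=
  fun i => if h : p ≤ (i:ℕ) + k ∧ (i:ℕ) < p ∧ k ≤ p
           then c ⟨(i:ℕ) - (p-k), by omega⟩ else 0

lemma embF_add (p q k : ℕ) (c c' : Fin k → ℂ) :
    embF p q k (c + c') = embF p q k c + embF p q k c' := by
  funext i
  simp only [Pi.add_apply]
  unfold embF
  split_ifs with h <;> simp

lemma embF_smul (p q k : ℕ) (a : ℂ) (c : Fin k → ℂ) :
    embF p q k (a • c) = a • embF p q k c := by
  funext i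
  simp only [Pi.smul_apply, smul_eq_mul]
  unfold embF
  split_ifs with h <;> simp

lemma sum_single_mul (p q : ℕ) (g : Fin (p+q) → ℝ) (m0 : Fin (p+q)) :
    ∑ i : Fin (p+q), g i * Complex.normSq ((Pi.single m0 1 : Fin (p+q) → ℂ) i) = g m0 := by
  rw [Finset.sum_eq_single m0]
  · simp
  · intro b _ hb; simp [Pi.single_eq_of_ne hb]
  · simp

end CFhelpers

/-- Courant–Fischer analogue, max-min form: for `1 ≤ k ≤ p`,
(i) for every `(k−1)`-tuple `u` there is `x ∈ ℂⁿ₊` orthogonal to all `u_i` with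
`R_A(x) ≤ λ_k`; (ii) there is a `(k−1)`-tuple `u` such that every `x ∈ ℂⁿ₊`
orthogonal to all `u_i` has `R_A(x) ≥ λ_k`, with `λ_k` attained. -/
theorem courant_fischer_max_min
    (p q : ℕ) (hp : 0 < p) (hq : 0 < q)
    (A : Matrix (Fin (p + q)) (Fin (p + q)) ℂ)
    (lam : Fin p → ℝ) (mu : Fin q → ℝ)
    (hA : IsAdmissible p q hp hq A lam mu)
    (k : ℕ) (hk1 : 1 ≤ k) (hk2 : k ≤ p) :
    (∀ u : Fin (k - 1) → Fin (p + q) → ℂ,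
        ∃ x : Fin (p + q) → ℂ, 0 < (pairing p q x x).re ∧
          (∀ i, pairing p q x (u i) = 0) ∧
          rayleigh p q A x ≤ lam ⟨k - 1, by omega⟩) ∧
    (∃ u : Fin (k - 1) → Fin (p + q) → ℂ,
        (∀ x : Fin (p + q) → ℂ, 0 < (pairing p q x x).re →
            (∀ i, pairing p q x (u i) = 0) →
            lam ⟨k - 1, by omega⟩ ≤ rayleigh p q A x) ∧
        (∃ x : Fin (p + q) → ℂ, 0 < (pairing p q x x).re ∧
            (∀ i, pairing p q x (u i) = 0) ∧
            rayleigh p q A x = lam ⟨k - 1, by omega⟩)) := by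
  obtain ⟨-, hlam, hmu, hlm, U, hUnit, hUJ, hAeq⟩ := hA
  have hdet : IsUnit U.det := (isUnit_iff_isUnit_det U).mp hUnit
  have hU' := UJU p q U hUnit hUJ
  have hinvU : U⁻¹ * U = 1 := nonsing_inv_mul U hdet
  have hUinv : U * U⁻¹ = 1 := mul_nonsing_inv U hdet
  set dr := drFun p q lam mu with hdrdef
  have hAU : ∀ y, A.mulVec (U.mulVec y)
      = U.mulVec ((Matrix.diagonal (fun i => ((dr i : ℝ) : ℂ))).mulVec y) := by
    intro y
    rw [mulVec_mulVec, mulVec_mulVec, hAeq, diagEntries_eq]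
    congr 1
    rw [mul_assoc (U * Matrix.diagonal _) U⁻¹ U, hinvU, mul_one]
  have hdrlt : ∀ (i : Fin (p+q)) (h : (i:ℕ) < p),
      dr i = lam ⟨p - 1 - (i:ℕ), by omega⟩ := by
    intro i h; simp [hdrdef, drFun, h]
  have hdrge : ∀ (i : Fin (p+q)) (h : ¬ (i:ℕ) < p),
      dr i = mu ⟨(i:ℕ) - p, by have := i.isLt; omega⟩ := by
    intro i h; simp [hdrdef, drFun, h]
  constructor
  · -- part (i)
    intro u
    let f : (Fin k → ℂ) →ₗ[ℂ] (Fin (k-1) → ℂ) :=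
      { toFun := fun c i => pairing p q (U.mulVec (embF p q k c)) (u i)
        map_add' := by
          intro c c'
          funext i
          show pairing p q (U.mulVec (embF p q k (c + c'))) (u i) = _
          rw [embF_add, mulVec_add, pairing_add_left]
          rfl
        map_smul' := by
          intro a c
          funext i
          show pairing p q (U.mulVec (embF p q k (a • c))) (u i) = _
          rw [embF_smul, mulVec_smul, pairing_smul_left]
          rfl }
    obtain ⟨c, hc0, hfc⟩ := exists_ker k (k-1) f (by omega)
    have hypos : 0 < ∑ i : Fin (p+q),
        (if (i:ℕ) < p then (1:ℝ) else -1) * Complex.normSq (embF p q k c i) := by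
      apply Finset.sum_pos'
      · intro i _
        by_cases h : (i:ℕ) < p
        · simp [h, Complex.normSq_nonneg]
        · have hcond : ¬ (p ≤ (i:ℕ) + k ∧ (i:ℕ) < p ∧ k ≤ p) := by omega
          simp [h, embF, hcond]
      · obtain ⟨j, hj⟩ := Function.ne_iff.mp hc0
        have hjlt := j.isLt
        refine ⟨⟨p - k + (j:ℕ), by omega⟩, Finset.mem_univ _, ?_⟩
        have hcond : p ≤ (p - k + (j:ℕ)) + k ∧ (p - k + (j:ℕ)) < p ∧ k ≤ p := by omega
        have hemb : embF p q k c ⟨p - k + (j:ℕ), by omega⟩ = c j := by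
          unfold embF
          rw [dif_pos hcond]
          congr 1
          apply Fin.ext
          simp only [Fin.val_mk]
          omega
        rw [hemb]
        have : ((⟨p - k + (j:ℕ), by omega⟩ : Fin (p+q)) : ℕ) < p := by simp only [Fin.val_mk]; omega
        rw [if_pos this]
        have := Complex.normSq_pos.mpr (by simpa using hj)
        linarith
    refine ⟨U.mulVec (embF p q k c), ?_, ?_, ?_⟩
    · rw [pairing_mulVec p q U hU', pairing_self_re]
      exact hypos
    · intro i
      have := congrFun hfc i
      simpa [f] using this
    · unfold rayleigh
      rw [hAU, pairing_mulVec p q U hU', pairing_mulVec p q U hU',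
        pairing_diag_re, pairing_self_re, div_le_iff₀ hypos, Finset.mul_sum]
      apply Finset.sum_le_sum
      intro i _
      by_cases h : (i:ℕ) < p
      · by_cases h2 : p ≤ (i:ℕ) + k
        · have hle : lam ⟨p - 1 - (i:ℕ), by omega⟩ ≤ lam ⟨k - 1, by omega⟩ := by
            apply hlam
            simp [Fin.mk_le_mk]
            omega
          rw [hdrlt i h]
          simp only [h, if_true, one_mul]
          calc lam ⟨p - 1 - (i:ℕ), by omega⟩ * Complex.normSq (embF p q k c i)
              ≤ lam ⟨k - 1, by omega⟩ * Complex.normSq (embF p q k c i) :=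
                mul_le_mul_of_nonneg_right hle (Complex.normSq_nonneg _)
            _ = _ := by ring
        · have hcond : ¬ (p ≤ (i:ℕ) + k ∧ (i:ℕ) < p ∧ k ≤ p) := by omega
          have h0 : embF p q k c i = 0 := by simp [embF, hcond]
          simp [h0]
      · have hcond : ¬ (p ≤ (i:ℕ) + k ∧ (i:ℕ) < p ∧ k ≤ p) := by omega
        have h0 : embF p q k c i = 0 := by simp [embF, hcond]
        simp [h0]
  · -- part (ii)
    have hjlt : ∀ i : Fin (k-1), p - 1 - (i:ℕ) < p + q := by
      intro i; omega
    set uu : Fin (k-1) → Fin (p+q) → ℂ := fun i m =>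
      (if (m:ℕ) < p then 1 else -1) *
        (starRingEnd ℂ) (U⁻¹ ⟨p - 1 - (i:ℕ), hjlt i⟩ m) with huu
    have hpxu : ∀ (x : Fin (p+q) → ℂ) (i : Fin (k-1)),
        pairing p q x (uu i) = U⁻¹.mulVec x ⟨p - 1 - (i:ℕ), hjlt i⟩ := by
      intro x i
      rw [huu]
      exact pairing_dual p q (U⁻¹ ⟨p - 1 - (i:ℕ), hjlt i⟩) x
    refine ⟨uu, ?_, ?_⟩
    · -- lower bound
      intro x hx hortho
      set y := U⁻¹.mulVec x with hy
      have hxy : x = U.mulVec y := by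
        rw [hy, mulVec_mulVec, hUinv, one_mulVec]
      have hy0 : ∀ m : Fin (p+q), p - k < (m:ℕ) → (m:ℕ) < p → y m = 0 := by
        intro m h1 h2
        have hlt : p - 1 - (m:ℕ) < k - 1 := by omega
        have hth := hortho ⟨p - 1 - (m:ℕ), hlt⟩
        rw [hpxu] at hth
        have hje : (⟨p - 1 - ((⟨p - 1 - (m:ℕ), hlt⟩ : Fin (k-1)):ℕ), hjlt _⟩ : Fin (p+q)) = m := by
          apply Fin.ext
          simp only [Fin.val_mk]
          omega
        rw [hje] at hth
        exact hth
      rw [hxy] at hx ⊢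
      rw [pairing_mulVec p q U hU', pairing_self_re] at hx
      unfold rayleigh
      rw [hAU, pairing_mulVec p q U hU', pairing_mulVec p q U hU',
        pairing_diag_re, pairing_self_re, le_div_iff₀ hx, Finset.mul_sum]
      apply Finset.sum_le_sum
      intro m _
      by_cases h : (m:ℕ) < p
      · by_cases h2 : (m:ℕ) ≤ p - k
        · have hle : lam ⟨k - 1, by omega⟩ ≤ lam ⟨p - 1 - (m:ℕ), by omega⟩ := by
            apply hlam
            simp [Fin.mk_le_mk]
            omega
          rw [hdrlt m h]
          simp only [h, if_true, one_mul]
          calc lam ⟨k - 1, by omega⟩ * Complex.normSq (y m)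
              ≤ lam ⟨p - 1 - (m:ℕ), by omega⟩ * Complex.normSq (y m) :=
                mul_le_mul_of_nonneg_right hle (Complex.normSq_nonneg _)
            _ = _ := by ring
        · have h0 : y m = 0 := hy0 m (by omega) h
          simp [h0]
      · have hmle : dr m ≤ lam ⟨k - 1, by omega⟩ := by
          rw [hdrge m h]
          have h1 : mu ⟨(m:ℕ) - p, by have := m.isLt; omega⟩ ≤ mu ⟨0, hq⟩ := by
            apply hmu
            simp [Fin.mk_le_mk]
          have h2 : lam ⟨0, hp⟩ ≤ lam ⟨k - 1, by omega⟩ := by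
            apply hlam
            simp [Fin.mk_le_mk]
          linarith
        have hnsq := Complex.normSq_nonneg (y m)
        simp only [h, if_false]
        nlinarith
    · -- attainment
      have hm0lt : p - k < p + q := by omega
      refine ⟨U.mulVec (Pi.single ⟨p - k, hm0lt⟩ 1), ?_, ?_, ?_⟩
      · rw [pairing_mulVec p q U hU', pairing_self_re,
          sum_single_mul p q (fun i => if (i:ℕ) < p then (1:ℝ) else -1) ⟨p - k, hm0lt⟩]
        have : ((⟨p - k, hm0lt⟩ : Fin (p+q)) : ℕ) < p := by simp only [Fin.val_mk]; omega
        rw [if_pos this]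
        norm_num
      · intro i
        rw [hpxu, mulVec_mulVec, hinvU, one_mulVec]
        apply Pi.single_eq_of_ne
        apply Fin.ne_of_val_ne
        have := i.isLt
        simp only [Fin.val_mk]
        omega
      · unfold rayleigh
        rw [hAU, pairing_mulVec p q U hU', pairing_mulVec p q U hU',
          pairing_diag_re, pairing_self_re,
          sum_single_mul p q (fun i => ((if (i:ℕ) < p then (1:ℝ) else -1) * dr i)) ⟨p - k, hm0lt⟩,
          sum_single_mul p q (fun i => if (i:ℕ) < p then (1:ℝ) else -1) ⟨p - k, hm0lt⟩]
        have hvp : ((⟨p - k, hm0lt⟩ : Fin (p+q)) : ℕ) < p := by simp only [Fin.val_mk]; omega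
        rw [if_pos hvp, hdrlt _ hvp]
        have hfe : (⟨p - 1 - ((⟨p - k, hm0lt⟩ : Fin (p+q)):ℕ), by omega⟩ : Fin p)
            = ⟨k - 1, by omega⟩ := by
          apply Fin.ext
          simp only [Fin.val_mk]
          omega
        rw [hfe]
        norm_num
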